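/- Let n ≥ 2, let 𝕌 ⊆ ℝ be a nonempty open interval containing a point u₀, and let p : 𝕌 → Sym(n,ℝ) be smooth. Suppose there exists a smooth vector field D on 𝕄 = 𝕌×ℝ×ℝⁿ satisfying ℒ_D G_β(p) = 2·G_β(p) (an infinitesimal dilation) and D(u₀, v, 0) = 0 for all v ∈ ℝ (D vanishes along the null geodesic {u = u₀, x = 0}). Then p(u) = 0 for every u ∈ 𝕌; that is, G_β(p) is the flat metric 2 du dv − dxᵀdx. -/

import Mathlib

open Matrix

attribute [local instance] Matrix.normedAddCommGroup Matrix.normedSpace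

noncomputable section

/-- The manifold `ℝ × ℝ × ℝⁿ`, with points `(u, v, x)`. -/
abbrev Mfd (n : ℕ) := ℝ × ℝ × (Fin n → ℝ)

/-- The Brinkmann metric `2 du dv + xᵀ p(u) x du² − dxᵀ dx`, as a field of bilinear forms. -/
def Gb (n : ℕ) (p : ℝ → Matrix (Fin n) (Fin n) ℝ) :
    Mfd n → Mfd n → Mfd n → ℝ := fun m X₁ X₂ =>
  X₁.1 * X₂.2.1 + X₂.1 * X₁.2.1 + (m.2.2 ⬝ᵥ (p m.1 *ᵥ m.2.2)) * X₁.1 * X₂.1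
    - X₁.2.2 ⬝ᵥ X₂.2.2

/-- Lie derivative of a field of bilinear forms along a vector field. -/
def lieD (n : ℕ) (V : Mfd n → Mfd n) (G : Mfd n → Mfd n → Mfd n → ℝ) :
    Mfd n → Mfd n → Mfd n → ℝ := fun m X Y =>
  fderiv ℝ (fun m' => G m' X Y) m (V m)
    + G m (fderiv ℝ V m X) Y + G m X (fderiv ℝ V m Y)

namespace Stmt7Aux

variable {n : ℕ}

/-- basis directions -/
def eU : Mfd n := (1, 0, 0)
def eV : Mfd n := (0, 1, 0)
def eX (i : Fin n) : Mfd n := (0, 0, Pi.single i 1)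

@[simp] lemma eU_1 : (eU (n := n)).1 = 1 := rfl
@[simp] lemma eU_21 : (eU (n := n)).2.1 = 0 := rfl
@[simp] lemma eU_22 : (eU (n := n)).2.2 = 0 := rfl
@[simp] lemma eV_1 : (eV (n := n)).1 = 0 := rfl
@[simp] lemma eV_21 : (eV (n := n)).2.1 = 1 := rfl
@[simp] lemma eV_22 : (eV (n := n)).2.2 = 0 := rfl
@[simp] lemma eX_1 (i : Fin n) : (eX i).1 = 0 := rfl
@[simp] lemma eX_21 (i : Fin n) : (eX i).2.1 = 0 := rfl
@[simp] lemma eX_22 (i : Fin n) : (eX i).2.2 = Pi.single i 1 := rfl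

/-- directional derivative -/
def pd (f : Mfd n → ℝ) (X : Mfd n) : Mfd n → ℝ := fun m => fderiv ℝ f m X

lemma pd_congr_on {Ω : Set (Mfd n)} (hΩ : IsOpen Ω) {f g : Mfd n → ℝ}
    (h : ∀ m' ∈ Ω, f m' = g m') {m : Mfd n} (hm : m ∈ Ω) (X : Mfd n) :
    pd f X m = pd g X m := by
  have : f =ᶠ[nhds m] g := by
    filter_upwards [hΩ.mem_nhds hm] with m' hm' using h m' hm'
  rw [pd, pd, this.fderiv_eq]

section pdArith

variable {f g : Mfd n → ℝ} {m X : Mfd n}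

lemma pd_add (hf : DifferentiableAt ℝ f m) (hg : DifferentiableAt ℝ g m) :
    pd (fun m' => f m' + g m') X m = pd f X m + pd g X m := by
  rw [pd, fderiv_fun_add hf hg]; rfl

lemma pd_sub (hf : DifferentiableAt ℝ f m) (hg : DifferentiableAt ℝ g m) :
    pd (fun m' => f m' - g m') X m = pd f X m - pd g X m := by
  rw [pd, fderiv_fun_sub hf hg]; rfl

lemma pd_const (c : ℝ) : pd (fun _ : Mfd n => c) X m = 0 := by
  rw [pd, fderiv_fun_const]; rfl

lemma pd_const_sub (c : ℝ) : pd (fun m' => c - g m') X m = - pd g X m := by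
  rw [pd, fderiv_const_sub c]; rfl

lemma pd_mul (hf : DifferentiableAt ℝ f m) (hg : DifferentiableAt ℝ g m) :
    pd (fun m' => f m' * g m') X m = f m * pd g X m + pd f X m * g m := by
  rw [pd, fderiv_fun_mul hf hg]
  simp only [ContinuousLinearMap.add_apply, ContinuousLinearMap.smul_apply, smul_eq_mul]
  rw [pd, pd]
  ring

lemma pd_const_mul (hg : DifferentiableAt ℝ g m) (c : ℝ) :
    pd (fun m' => c * g m') X m = c * pd g X m := by
  rw [pd, fderiv_const_mul hg c]; rfl

lemma pd_sum {ι : Type*} {s : Finset ι} {F : ι → Mfd n → ℝ}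
    (hF : ∀ k ∈ s, DifferentiableAt ℝ (F k) m) :
    pd (fun m' => ∑ k ∈ s, F k m') X m = ∑ k ∈ s, pd (F k) X m := by
  rw [pd, fderiv_fun_sum hF, ContinuousLinearMap.sum_apply]; rfl

end pdArith

/-- smoothness of the directional derivative -/
lemma pd_contDiffAt {f : Mfd n → ℝ} {m : Mfd n} (hf : ContDiffAt ℝ (⊤ : ℕ∞) f m)
    (X : Mfd n) : ContDiffAt ℝ (⊤ : ℕ∞) (pd f X) m := by
  have h1 : ContDiffAt ℝ (⊤ : ℕ∞) (fderiv ℝ f) m := hf.fderiv_right (le_of_eq ENat.coe_top_add_one)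
  exact ((ContinuousLinearMap.apply ℝ ℝ X).contDiff.contDiffAt).comp m h1

lemma pd_differentiableAt {f : Mfd n → ℝ} {m : Mfd n} (hf : ContDiffAt ℝ (⊤ : ℕ∞) f m)
    (X : Mfd n) : DifferentiableAt ℝ (pd f X) m :=
  (pd_contDiffAt hf X).differentiableAt (by simp)

/-- Schwarz symmetry -/
lemma pd_comm {f : Mfd n → ℝ} {m : Mfd n} (hf : ∀ᶠ m' in nhds m, ContDiffAt ℝ (⊤ : ℕ∞) f m')
    (X Y : Mfd n) : pd (pd f X) Y m = pd (pd f Y) X m := by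
  have hm : ContDiffAt ℝ (⊤ : ℕ∞) f m := hf.self_of_nhds
  have hd : DifferentiableAt ℝ (fderiv ℝ f) m :=
    (hm.fderiv_right (le_of_eq ENat.coe_top_add_one)).differentiableAt (by simp)
  have key : ∀ Z W : Mfd n, pd (pd f Z) W m = fderiv ℝ (fderiv ℝ f) m W Z := by
    intro Z W
    have : pd f Z = fun m' => (fderiv ℝ f m') Z := rfl
    rw [pd, this, fderiv_clm_apply hd (differentiableAt_const Z)]
    simp
  rw [key, key]
  exact (hm.isSymmSndFDerivAt (by rw [minSmoothness_of_isRCLikeNormedField]; exact WithTop.coe_le_coe.mpr le_top)) Y X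


/-- decompose a vector in the basis -/
lemma basis_decomp (X : Mfd n) :
    X = X.1 • eU + X.2.1 • eV + ∑ i, X.2.2 i • eX i := by
  have h22 : (∑ i, X.2.2 i • eX i) = ((0:ℝ), (0:ℝ), X.2.2) := by
    refine Prod.ext ?_ (Prod.ext ?_ ?_)
    · rw [Prod.fst_sum]; simp [eX]
    · rw [Prod.snd_sum, Prod.fst_sum]; simp [eX]
    · rw [Prod.snd_sum, Prod.snd_sum]
      funext j
      simp [eX, Finset.sum_apply, Pi.single_apply]
  rw [h22]
  refine Prod.ext ?_ (Prod.ext ?_ ?_) <;> simp [eU, eV]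

/-- a function with vanishing directional derivatives on a convex open set is constant there -/
lemma const_on {Ω : Set (Mfd n)} (hΩo : IsOpen Ω) (hΩc : Convex ℝ Ω) {f : Mfd n → ℝ}
    (hf : ∀ m ∈ Ω, ContDiffAt ℝ (⊤ : ℕ∞) f m)
    (hU : ∀ m ∈ Ω, pd f eU m = 0) (hV : ∀ m ∈ Ω, pd f eV m = 0)
    (hX : ∀ m ∈ Ω, ∀ i, pd f (eX i) m = 0)
    {m₁ m₂ : Mfd n} (h₁ : m₁ ∈ Ω) (h₂ : m₂ ∈ Ω) : f m₁ = f m₂ := by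
  have hzero : ∀ m ∈ Ω, fderiv ℝ f m = 0 := by
    intro m hm
    refine ContinuousLinearMap.ext fun X => ?_
    rw [ContinuousLinearMap.zero_apply]
    calc fderiv ℝ f m X = fderiv ℝ f m (X.1 • eU + X.2.1 • eV + ∑ i, X.2.2 i • eX i) := by
          rw [← basis_decomp]
      _ = 0 := by
          rw [map_add, map_add, (fderiv ℝ f m).map_smul, (fderiv ℝ f m).map_smul, map_sum]
          rw [show fderiv ℝ f m eU = 0 from hU m hm, show fderiv ℝ f m eV = 0 from hV m hm]
          simp only [smul_zero, zero_add]
          refine Finset.sum_eq_zero fun i _ => ?_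
          rw [(fderiv ℝ f m).map_smul, show fderiv ℝ f m (eX i) = 0 from hX m hm i, smul_zero]
  exact hΩc.is_const_of_fderivWithin_eq_zero
    (fun m hm => ((hf m hm).differentiableAt (by simp)).differentiableWithinAt)
    (fun m hm => by rw [fderivWithin_of_isOpen hΩo hm]; exact hzero m hm) h₁ h₂

/-- directional derivative along a line on which the function is constant -/
lemma pd_line_const {f : Mfd n → ℝ} {m₀ X : Mfd n} (hf : DifferentiableAt ℝ f m₀) {c : ℝ}
    (h : ∀ t : ℝ, f (m₀ + t • X) = c) : pd f X m₀ = 0 := by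
  have hcurve : HasDerivAt (fun t : ℝ => m₀ + t • X) X 0 := by
    simpa using ((hasDerivAt_id (0:ℝ)).smul_const X).const_add m₀
  have h1 : HasDerivAt (fun t : ℝ => f (m₀ + t • X)) (fderiv ℝ f m₀ X) 0 := by
    have := hf.hasFDerivAt.comp_hasDerivAt_of_eq 0 hcurve (by simp)
    exact this
  have h2 : HasDerivAt (fun t : ℝ => f (m₀ + t • X)) 0 0 := by
    simp only [h]; exact hasDerivAt_const 0 c
  exact h1.unique h2


/-! ### coordinate continuous linear maps and quadratic-type derivative computations -/

def cU : Mfd n →L[ℝ] ℝ := ContinuousLinearMap.fst ℝ ℝ (ℝ × (Fin n → ℝ))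

def cX (i : Fin n) : Mfd n →L[ℝ] ℝ :=
  (ContinuousLinearMap.proj i).comp ((ContinuousLinearMap.snd ℝ ℝ (Fin n → ℝ)).comp
    (ContinuousLinearMap.snd ℝ ℝ (ℝ × (Fin n → ℝ))))

@[simp] lemma cU_apply (X : Mfd n) : cU X = X.1 := rfl
@[simp] lemma cX_apply (i : Fin n) (X : Mfd n) : cX i X = X.2.2 i := rfl

/-- evaluation of a matrix entry, as a continuous linear map -/
def entryCLM (i j : Fin n) : Matrix (Fin n) (Fin n) ℝ →L[ℝ] ℝ :=
  (ContinuousLinearMap.proj j).comp (ContinuousLinearMap.proj (R := ℝ)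
    (φ := fun _ : Fin n => Fin n → ℝ) i)

@[simp] lemma entryCLM_apply (i j : Fin n) (M : Matrix (Fin n) (Fin n) ℝ) :
    entryCLM i j M = M i j := rfl

lemma hasDerivAt_entry {q : ℝ → Matrix (Fin n) (Fin n) ℝ} {u : ℝ}
    {q'u : Matrix (Fin n) (Fin n) ℝ} (hq : HasDerivAt q q'u u) (i j : Fin n) :
    HasDerivAt (fun t => q t i j) (q'u i j) u := by
  have := (entryCLM i j).hasFDerivAt.comp_hasDerivAt u hq
  exact this

/-- entry of `q` composed with the first projection, `HasFDerivAt` form -/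
lemma hasFDerivAt_entry_fst {q : ℝ → Matrix (Fin n) (Fin n) ℝ} {m : Mfd n}
    {q'u : Matrix (Fin n) (Fin n) ℝ} (hq : HasDerivAt q q'u m.1) (i j : Fin n) :
    HasFDerivAt (fun m' : Mfd n => q m'.1 i j) ((q'u i j) • cU) m :=
  HasDerivAt.comp_hasFDerivAt _ (hasDerivAt_entry hq i j) cU.hasFDerivAt

/-- a quadratic-type scalar function built from a matrix curve -/
def Qf (q : ℝ → Matrix (Fin n) (Fin n) ℝ) : Mfd n → ℝ :=
  fun m => ∑ i, ∑ j, m.2.2 i * q m.1 i j * m.2.2 j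

lemma dot_eq_Qf (q : ℝ → Matrix (Fin n) (Fin n) ℝ) (m : Mfd n) :
    m.2.2 ⬝ᵥ (q m.1 *ᵥ m.2.2) = Qf q m := by
  simp [Qf, dotProduct, mulVec, Finset.mul_sum, mul_assoc]

lemma hasFDerivAt_Qf {q : ℝ → Matrix (Fin n) (Fin n) ℝ} {m : Mfd n}
    {q'u : Matrix (Fin n) (Fin n) ℝ} (hq : HasDerivAt q q'u m.1) :
    HasFDerivAt (Qf q)
      (∑ i, ∑ j, ((m.2.2 i * q m.1 i j) • cX j
        + m.2.2 j • (m.2.2 i • ((q'u i j) • cU) + q m.1 i j • cX i))) m := by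
  refine HasFDerivAt.fun_sum fun i _ => HasFDerivAt.fun_sum fun j _ => ?_
  exact ((cX i).hasFDerivAt.mul (hasFDerivAt_entry_fst hq i j)).mul (cX j).hasFDerivAt

lemma differentiableAt_Qf {q : ℝ → Matrix (Fin n) (Fin n) ℝ} {m : Mfd n}
    {q'u : Matrix (Fin n) (Fin n) ℝ} (hq : HasDerivAt q q'u m.1) :
    DifferentiableAt ℝ (Qf q) m := (hasFDerivAt_Qf hq).differentiableAt

lemma fderiv_Qf_apply {q : ℝ → Matrix (Fin n) (Fin n) ℝ} {m : Mfd n}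
    {q'u : Matrix (Fin n) (Fin n) ℝ} (hq : HasDerivAt q q'u m.1) (X : Mfd n) :
    fderiv ℝ (Qf q) m X = X.1 * (∑ i, ∑ j, m.2.2 i * q'u i j * m.2.2 j)
      + ∑ i, ∑ j, q m.1 i j * (X.2.2 i * m.2.2 j + m.2.2 i * X.2.2 j) := by
  rw [(hasFDerivAt_Qf hq).fderiv]
  simp only [ContinuousLinearMap.sum_apply, ContinuousLinearMap.add_apply,
    ContinuousLinearMap.smul_apply, cU_apply, cX_apply, smul_eq_mul]
  rw [Finset.mul_sum, ← Finset.sum_add_distrib]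
  refine Finset.sum_congr rfl fun i _ => ?_
  rw [Finset.mul_sum, ← Finset.sum_add_distrib]
  refine Finset.sum_congr rfl fun j _ => by ring

/-- a linear-type scalar function built from a matrix curve (one row paired with x) -/
def Lf (q : ℝ → Matrix (Fin n) (Fin n) ℝ) (k : Fin n) : Mfd n → ℝ :=
  fun m => ∑ l, q m.1 k l * m.2.2 l

lemma hasFDerivAt_Lf {q : ℝ → Matrix (Fin n) (Fin n) ℝ} {m : Mfd n}
    {q'u : Matrix (Fin n) (Fin n) ℝ} (hq : HasDerivAt q q'u m.1) (k : Fin n) :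
    HasFDerivAt (Lf q k)
      (∑ l, (q m.1 k l • cX l + m.2.2 l • ((q'u k l) • cU))) m := by
  refine HasFDerivAt.fun_sum fun l _ => ?_
  exact (hasFDerivAt_entry_fst hq k l).mul (cX l).hasFDerivAt

lemma differentiableAt_Lf {q : ℝ → Matrix (Fin n) (Fin n) ℝ} {m : Mfd n}
    {q'u : Matrix (Fin n) (Fin n) ℝ} (hq : HasDerivAt q q'u m.1) (k : Fin n) :
    DifferentiableAt ℝ (Lf q k) m := (hasFDerivAt_Lf hq k).differentiableAt

lemma fderiv_Lf_apply {q : ℝ → Matrix (Fin n) (Fin n) ℝ} {m : Mfd n}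
    {q'u : Matrix (Fin n) (Fin n) ℝ} (hq : HasDerivAt q q'u m.1) (k : Fin n) (X : Mfd n) :
    fderiv ℝ (Lf q k) m X = X.1 * (∑ l, q'u k l * m.2.2 l) + ∑ l, q m.1 k l * X.2.2 l := by
  rw [(hasFDerivAt_Lf hq k).fderiv]
  simp only [ContinuousLinearMap.sum_apply, ContinuousLinearMap.add_apply,
    ContinuousLinearMap.smul_apply, cU_apply, cX_apply, smul_eq_mul]
  rw [Finset.mul_sum, ← Finset.sum_add_distrib]
  refine Finset.sum_congr rfl fun l _ => by ring


/-- column version of `Lf` -/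
def Lg (q : ℝ → Matrix (Fin n) (Fin n) ℝ) (k : Fin n) : Mfd n → ℝ :=
  fun m => ∑ l, q m.1 l k * m.2.2 l

lemma hasFDerivAt_Lg {q : ℝ → Matrix (Fin n) (Fin n) ℝ} {m : Mfd n}
    {q'u : Matrix (Fin n) (Fin n) ℝ} (hq : HasDerivAt q q'u m.1) (k : Fin n) :
    HasFDerivAt (Lg q k)
      (∑ l, (q m.1 l k • cX l + m.2.2 l • ((q'u l k) • cU))) m := by
  refine HasFDerivAt.fun_sum fun l _ => ?_
  exact (hasFDerivAt_entry_fst hq l k).mul (cX l).hasFDerivAt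

lemma differentiableAt_Lg {q : ℝ → Matrix (Fin n) (Fin n) ℝ} {m : Mfd n}
    {q'u : Matrix (Fin n) (Fin n) ℝ} (hq : HasDerivAt q q'u m.1) (k : Fin n) :
    DifferentiableAt ℝ (Lg q k) m := (hasFDerivAt_Lg hq k).differentiableAt

lemma fderiv_Lg_apply {q : ℝ → Matrix (Fin n) (Fin n) ℝ} {m : Mfd n}
    {q'u : Matrix (Fin n) (Fin n) ℝ} (hq : HasDerivAt q q'u m.1) (k : Fin n) (X : Mfd n) :
    fderiv ℝ (Lg q k) m X = X.1 * (∑ l, q'u l k * m.2.2 l) + ∑ l, q m.1 l k * X.2.2 l := by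
  rw [(hasFDerivAt_Lg hq k).fderiv]
  simp only [ContinuousLinearMap.sum_apply, ContinuousLinearMap.add_apply,
    ContinuousLinearMap.smul_apply, cU_apply, cX_apply, smul_eq_mul]
  rw [Finset.mul_sum, ← Finset.sum_add_distrib]
  refine Finset.sum_congr rfl fun l _ => by ring

/-! ### directional-derivative collapse lemmas -/

section Collapse

variable {q : ℝ → Matrix (Fin n) (Fin n) ℝ} {q'u : Matrix (Fin n) (Fin n) ℝ} {m : Mfd n}

lemma pd_Lf_eV (hq : HasDerivAt q q'u m.1) (k : Fin n) : pd (Lf q k) eV m = 0 := by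
  rw [pd, fderiv_Lf_apply hq]; simp

lemma pd_Lf_eX (hq : HasDerivAt q q'u m.1) (k j : Fin n) :
    pd (Lf q k) (eX j) m = q m.1 k j := by
  rw [pd, fderiv_Lf_apply hq]
  simp [Pi.single_apply]

lemma pd_Lg_eX (hq : HasDerivAt q q'u m.1) (k j : Fin n) :
    pd (Lg q k) (eX j) m = q m.1 j k := by
  rw [pd, fderiv_Lg_apply hq]
  simp [Pi.single_apply]

lemma pd_Qf_eX (hq : HasDerivAt q q'u m.1) (i : Fin n) :
    pd (Qf q) (eX i) m = Lf q i m + Lg q i m := by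
  rw [pd, fderiv_Qf_apply hq]
  simp only [eX_1, eX_22, zero_mul, zero_add, Lf, Lg, mul_add, Finset.sum_add_distrib]
  congr 1
  · rw [Finset.sum_comm]
    refine Finset.sum_congr rfl fun b _ => ?_
    simp [Pi.single_apply, mul_ite, ite_mul, mul_comm, mul_left_comm]
  · refine Finset.sum_congr rfl fun a _ => ?_
    simp [Pi.single_apply, mul_ite, ite_mul, mul_comm, mul_left_comm]

/-- derivative of a single matrix entry composed with the base point -/
lemma pd_entry (hq : HasDerivAt q q'u m.1) (k l : Fin n) (X : Mfd n) :
    pd (fun m' : Mfd n => q m'.1 k l) X m = X.1 * q'u k l := by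
  rw [pd, (hasFDerivAt_entry_fst hq k l).fderiv]
  simp [mul_comm]

/-- derivative of the affine function 2(u - u₀) -/
lemma pd_affine (u₀ : ℝ) (X : Mfd n) :
    pd (fun m' : Mfd n => 2 * (m'.1 - u₀)) X m = 2 * X.1 := by
  have h : HasFDerivAt (fun m' : Mfd n => 2 * (m'.1 - u₀)) ((2:ℝ) • cU) m := by
    have := (cU.hasFDerivAt (x := m).sub_const u₀).const_mul (2:ℝ)
    simpa using this
  rw [pd, h.fderiv]
  simp [mul_comm]

end Collapse

/-! ### the main development -/

def cV : Mfd n →L[ℝ] ℝ :=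
  (ContinuousLinearMap.fst ℝ ℝ (Fin n → ℝ)).comp (ContinuousLinearMap.snd ℝ ℝ (ℝ × (Fin n → ℝ)))

@[simp] lemma cV_apply (X : Mfd n) : cV X = X.2.1 := rfl

variable (n) in
def Om (U : Set ℝ) : Set (Mfd n) := {m : Mfd n | m.1 ∈ U}

lemma mem_Om {U : Set ℝ} {m : Mfd n} : m ∈ Om n U ↔ m.1 ∈ U := Iff.rfl

def Ac (D : Mfd n → Mfd n) : Mfd n → ℝ := fun m => (D m).1
def Bc (D : Mfd n → Mfd n) : Mfd n → ℝ := fun m => (D m).2.1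
def Wc (D : Mfd n → Mfd n) (i : Fin n) : Mfd n → ℝ := fun m => (D m).2.2 i

structure Ctx (n : ℕ) (U : Set ℝ) (u₀ : ℝ) (p : ℝ → Matrix (Fin n) (Fin n) ℝ)
    (D : Mfd n → Mfd n) : Prop where
  hUopen : IsOpen U
  hUconv : Convex ℝ U
  hu₀ : u₀ ∈ U
  hpsmooth : ContDiffOn ℝ (⊤ : ℕ∞) p U
  hpsymm : ∀ u ∈ U, (p u)ᵀ = p u
  hDsmooth : ContDiffOn ℝ (⊤ : ℕ∞) D {m : Mfd n | m.1 ∈ U}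
  hdilation : ∀ m ∈ {m : Mfd n | m.1 ∈ U}, ∀ X Y,
    lieD n D (Gb n p) m X Y = 2 * Gb n p m X Y
  hvanish : ∀ v : ℝ, D (u₀, v, 0) = 0

namespace Ctx

variable {U : Set ℝ} {u₀ : ℝ} {p : ℝ → Matrix (Fin n) (Fin n) ℝ} {D : Mfd n → Mfd n}
  (hc : Ctx n U u₀ p D)

include hc

lemma hOmo : IsOpen (Om n U) := hc.hUopen.preimage continuous_fst

lemma hOmc : Convex ℝ (Om n U) := hc.hUconv.linear_preimage (LinearMap.fst ℝ ℝ _)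

lemma hDca {m : Mfd n} (hm : m ∈ Om n U) : ContDiffAt ℝ (⊤ : ℕ∞) D m :=
  hc.hDsmooth.contDiffAt (hc.hOmo.mem_nhds hm)

lemma hDda {m : Mfd n} (hm : m ∈ Om n U) : DifferentiableAt ℝ D m :=
  (hc.hDca hm).differentiableAt (by simp)

lemma hAca {m : Mfd n} (hm : m ∈ Om n U) : ContDiffAt ℝ (⊤ : ℕ∞) (Ac D) m :=
  (cU.contDiff.contDiffAt).comp m (hc.hDca hm)

lemma hBca {m : Mfd n} (hm : m ∈ Om n U) : ContDiffAt ℝ (⊤ : ℕ∞) (Bc D) m :=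
  (cV.contDiff.contDiffAt).comp m (hc.hDca hm)

lemma hWca {m : Mfd n} (hm : m ∈ Om n U) (i : Fin n) : ContDiffAt ℝ (⊤ : ℕ∞) (Wc D i) m :=
  ((cX i).contDiff.contDiffAt).comp m (hc.hDca hm)

lemma hAnb {m : Mfd n} (hm : m ∈ Om n U) : ∀ᶠ m' in nhds m, ContDiffAt ℝ (⊤ : ℕ∞) (Ac D) m' := by
  filter_upwards [hc.hOmo.mem_nhds hm] with m' hm' using hc.hAca hm'

lemma hBnb {m : Mfd n} (hm : m ∈ Om n U) : ∀ᶠ m' in nhds m, ContDiffAt ℝ (⊤ : ℕ∞) (Bc D) m' := by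
  filter_upwards [hc.hOmo.mem_nhds hm] with m' hm' using hc.hBca hm'

lemma hWnb {m : Mfd n} (hm : m ∈ Om n U) (i : Fin n) :
    ∀ᶠ m' in nhds m, ContDiffAt ℝ (⊤ : ℕ∞) (Wc D i) m' := by
  filter_upwards [hc.hOmo.mem_nhds hm] with m' hm' using hc.hWca hm' i

lemma bridgeA {m : Mfd n} (hm : m ∈ Om n U) (X : Mfd n) :
    (fderiv ℝ D m X).1 = pd (Ac D) X m := by
  have : fderiv ℝ (Ac D) m = cU.comp (fderiv ℝ D m) :=
    (cU.hasFDerivAt.comp m (hc.hDda hm).hasFDerivAt).fderiv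
  rw [pd, this]; rfl

lemma bridgeB {m : Mfd n} (hm : m ∈ Om n U) (X : Mfd n) :
    (fderiv ℝ D m X).2.1 = pd (Bc D) X m := by
  have : fderiv ℝ (Bc D) m = cV.comp (fderiv ℝ D m) :=
    (cV.hasFDerivAt.comp m (hc.hDda hm).hasFDerivAt).fderiv
  rw [pd, this]; rfl

lemma bridgeW {m : Mfd n} (hm : m ∈ Om n U) (i : Fin n) (X : Mfd n) :
    (fderiv ℝ D m X).2.2 i = pd (Wc D i) X m := by
  have : fderiv ℝ (Wc D i) m = (cX i).comp (fderiv ℝ D m) :=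
    ((cX i).hasFDerivAt.comp m (hc.hDda hm).hasFDerivAt).fderiv
  rw [pd, this]; rfl

lemma hpu {u : ℝ} (hu : u ∈ U) : HasDerivAt p (deriv p u) u :=
  (((hc.hpsmooth.contDiffAt (hc.hUopen.mem_nhds hu)).differentiableAt
    (by simp))).hasDerivAt

lemma hp'u {u : ℝ} (hu : u ∈ U) : HasDerivAt (deriv p) (deriv (deriv p) u) u := by
  have h : ContDiffOn ℝ (⊤ : ℕ∞) (deriv p) U :=
    hc.hpsmooth.deriv_of_isOpen hc.hUopen (le_of_eq ENat.coe_top_add_one)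
  exact ((h.contDiffAt (hc.hUopen.mem_nhds hu)).differentiableAt
    (by simp)).hasDerivAt

/-- expansion of the dilation equation -/
lemma lie_expand (hm : m ∈ Om n U) (X Y : Mfd n) :
    X.1 * Y.1 * (fderiv ℝ (Qf p) m (D m)) + Gb n p m (fderiv ℝ D m X) Y
      + Gb n p m X (fderiv ℝ D m Y) = 2 * Gb n p m X Y := by
  have h := hc.hdilation m hm X Y
  rw [lieD] at h
  have hfun : (fun m' => Gb n p m' X Y)
      = fun m' => Qf p m' * (X.1 * Y.1) + (X.1 * Y.2.1 + Y.1 * X.2.1 - X.2.2 ⬝ᵥ Y.2.2) := by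
    funext m'
    rw [Gb, ← dot_eq_Qf]
    ring
  rw [hfun, fderiv_add_const, fderiv_mul_const (differentiableAt_Qf (hc.hpu hm))] at h
  rw [ContinuousLinearMap.smul_apply, smul_eq_mul] at h
  linarith [h]

/-! ### Gb applied to basis vectors -/

omit hc

lemma Gb_Vr (m Z : Mfd n) : Gb n p m Z eV = Z.1 := by simp [Gb]
lemma Gb_Vl (m Z : Mfd n) : Gb n p m eV Z = Z.1 := by simp [Gb]
lemma Gb_Ur (m Z : Mfd n) : Gb n p m Z eU = Z.2.1 + Qf p m * Z.1 := by
  rw [Gb, ← dot_eq_Qf]; simp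
lemma Gb_Ul (m Z : Mfd n) : Gb n p m eU Z = Z.2.1 + Qf p m * Z.1 := by
  rw [Gb, ← dot_eq_Qf]; simp
lemma Gb_Xr (j : Fin n) (m Z : Mfd n) : Gb n p m Z (eX j) = -(Z.2.2 j) := by
  simp [Gb]
lemma Gb_Xl (i : Fin n) (m Z : Mfd n) : Gb n p m (eX i) Z = -(Z.2.2 i) := by
  simp [Gb, dotProduct, Pi.single_apply]

include hc

/-! ### the component equations of the dilation identity -/

variable {m : Mfd n}

lemma e1 (hm : m ∈ Om n U) : pd (Ac D) eV m = 0 := by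
  have h := hc.lie_expand hm eV eV
  rw [Gb_Vr, Gb_Vl, Gb_Vr] at h
  rw [hc.bridgeA hm eV] at h
  simp at h
  linarith

lemma e2 (hm : m ∈ Om n U) (i : Fin n) : pd (Ac D) (eX i) m = pd (Wc D i) eV m := by
  have h := hc.lie_expand hm eV (eX i)
  rw [Gb_Xr, Gb_Vl, Gb_Vl] at h
  rw [hc.bridgeW hm i eV, hc.bridgeA hm (eX i)] at h
  simp at h
  linarith

lemma e3 (hm : m ∈ Om n U) : pd (Ac D) eU m + pd (Bc D) eV m = 2 := by
  have h := hc.lie_expand hm eU eV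
  rw [Gb_Vr, Gb_Ul, Gb_Vr] at h
  rw [hc.bridgeA hm eU, hc.bridgeB hm eV, hc.bridgeA hm eV] at h
  rw [hc.e1 hm] at h
  simp at h
  linarith

lemma e4 (hm : m ∈ Om n U) (i j : Fin n) :
    pd (Wc D i) (eX j) m + pd (Wc D j) (eX i) m = if i = j then 2 else 0 := by
  have h := hc.lie_expand hm (eX i) (eX j)
  rw [Gb_Xr, Gb_Xl, Gb_Xl] at h
  rw [hc.bridgeW hm i (eX j), hc.bridgeW hm j (eX i)] at h
  simp [Pi.single_apply] at h
  by_cases hij : i = j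
  · subst hij; simp at h ⊢; linarith
  · have hji : ¬ (j = i) := fun hh => hij hh.symm
    simp [hij, hji] at h ⊢
    linarith

lemma e5 (hm : m ∈ Om n U) (i : Fin n) :
    pd (Wc D i) eU m = pd (Bc D) (eX i) m + Qf p m * pd (Ac D) (eX i) m := by
  have h := hc.lie_expand hm eU (eX i)
  rw [Gb_Xr, Gb_Ul] at h
  rw [hc.bridgeW hm i eU, hc.bridgeB hm (eX i), hc.bridgeA hm (eX i)] at h
  have h2 : (2:ℝ) * Gb n p m eU (eX i) = 0 := by rw [Gb_Xr]; simp
  rw [h2] at h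
  simp at h
  linarith

lemma e6 (hm : m ∈ Om n U) :
    Ac D m * Qf (deriv p) m
      + (∑ i, ∑ j, p m.1 i j * (Wc D i m * m.2.2 j + m.2.2 i * Wc D j m))
      + 2 * pd (Bc D) eU m + 2 * Qf p m * pd (Ac D) eU m = 2 * Qf p m := by
  have h := hc.lie_expand hm eU eU
  rw [Gb_Ur, Gb_Ul, Gb_Ur] at h
  rw [hc.bridgeA hm eU, hc.bridgeB hm eU] at h
  rw [fderiv_Qf_apply (hc.hpu hm) (D m)] at h
  simp only [eU_1, eU_21, one_mul, mul_one] at h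
  have hW : ∀ i, (D m).2.2 i = Wc D i m := fun i => rfl
  have hA : (D m).1 = Ac D m := rfl
  rw [hA] at h
  simp only [hW] at h
  rw [show Qf (deriv p) m = ∑ i, ∑ j, m.2.2 i * deriv p m.1 i j * m.2.2 j from rfl]
  linarith

/-! ### boundary values along the null geodesic -/

lemma base_mem : ((u₀, 0, 0) : Mfd n) ∈ Om n U := hc.hu₀

omit hc in
lemma line_eq (t : ℝ) : ((u₀, 0, 0) : Mfd n) + t • eV = (u₀, t, 0) := by
  simp [eV, Prod.ext_iff]

lemma vanish_pdV_A : pd (Ac D) eV ((u₀, 0, 0) : Mfd n) = 0 := by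
  refine pd_line_const ((hc.hAca hc.base_mem).differentiableAt
    (by simp)) (c := 0) fun t => ?_
  rw [line_eq (n := n) (u₀ := u₀) t, Ac, hc.hvanish t]
  rfl

lemma vanish_pdV_B : pd (Bc D) eV ((u₀, 0, 0) : Mfd n) = 0 := by
  refine pd_line_const ((hc.hBca hc.base_mem).differentiableAt
    (by simp)) (c := 0) fun t => ?_
  rw [line_eq (n := n) (u₀ := u₀) t, Bc, hc.hvanish t]
  rfl

lemma vanish_pdV_W (i : Fin n) : pd (Wc D i) eV ((u₀, 0, 0) : Mfd n) = 0 := by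
  refine pd_line_const ((hc.hWca hc.base_mem i).differentiableAt
    (by simp)) (c := 0) fun t => ?_
  rw [line_eq (n := n) (u₀ := u₀) t, Wc, hc.hvanish t]
  rfl

/-! ### auxiliary derivative facts for Qf -/

omit hc in
lemma pd_Qf_eV {q : ℝ → Matrix (Fin n) (Fin n) ℝ} {q'u : Matrix (Fin n) (Fin n) ℝ}
    (hq : HasDerivAt q q'u m.1) : pd (Qf q) eV m = 0 := by
  rw [pd, fderiv_Qf_apply hq]
  simp

/-! ### Step A2 : the x-gradient of A vanishes identically -/

lemma stepA2 (hm : m ∈ Om n U) (i : Fin n) : pd (Ac D) (eX i) m = 0 := by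
  -- (a) the eV derivative of pd (Ac D) (eX i) vanishes on Om
  have ha : ∀ m' ∈ Om n U, pd (pd (Ac D) (eX i)) eV m' = 0 := by
    intro m' hm'
    rw [pd_comm (hc.hAnb hm') (eX i) eV]
    have : pd (pd (Ac D) eV) (eX i) m' = pd (fun _ => (0:ℝ)) (eX i) m' :=
      pd_congr_on hc.hOmo (fun m'' hm'' => hc.e1 hm'') hm' (eX i)
    rw [this, pd, fderiv_fun_const]
    rfl
  -- (b) the eX j derivatives vanish on Om
  have hb : ∀ m' ∈ Om n U, ∀ j, pd (pd (Ac D) (eX i)) (eX j) m' = 0 := by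
    intro m' hm' j
    -- s i j := pd (pd (Ac D) (eX i)) (eX j) equals t i j := pd (pd (Wc D i) (eX j)) eV
    have hs : ∀ i' j' : Fin n,
        pd (pd (Ac D) (eX i')) (eX j') m' = pd (pd (Wc D i') (eX j')) eV m' := by
      intro i' j'
      have h1 : pd (pd (Ac D) (eX i')) (eX j') m' = pd (pd (Wc D i') eV) (eX j') m' :=
        pd_congr_on hc.hOmo (fun m'' hm'' => hc.e2 hm'' i') hm' (eX j')
      rw [h1, pd_comm (hc.hWnb hm' i') eV (eX j')]
    have ht : ∀ i' j' : Fin n,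
        pd (pd (Wc D i') (eX j')) eV m' + pd (pd (Wc D j') (eX i')) eV m' = 0 := by
      intro i' j'
      have h1 : pd (fun m'' => pd (Wc D i') (eX j') m'' + pd (Wc D j') (eX i') m'') eV m'
          = pd (fun _ => (if i' = j' then (2:ℝ) else 0)) eV m' :=
        pd_congr_on hc.hOmo (fun m'' hm'' => hc.e4 hm'' i' j') hm' eV
      rw [pd_add (pd_differentiableAt (hc.hWca hm' i') (eX j'))
        (pd_differentiableAt (hc.hWca hm' j') (eX i')), pd_const] at h1
      exact h1
    have hsym : pd (pd (Ac D) (eX i)) (eX j) m' = pd (pd (Ac D) (eX j)) (eX i) m' :=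
      pd_comm (hc.hAnb hm') (eX i) (eX j)
    have e₁ := hs i j
    have e₂ := hs j i
    have e₃ := ht i j
    linarith
  -- (c) the eU derivative vanishes on Om
  have hcu : ∀ m' ∈ Om n U, pd (pd (Ac D) (eX i)) eU m' = 0 := by
    intro m' hm'
    have step1 : pd (pd (Ac D) (eX i)) eU m' = pd (pd (Ac D) eU) (eX i) m' :=
      pd_comm (hc.hAnb hm') (eX i) eU
    have step2 : pd (pd (Ac D) eU) (eX i) m' = - pd (pd (Bc D) eV) (eX i) m' := by
      have h1 : pd (pd (Ac D) eU) (eX i) m' = pd (fun m'' => 2 - pd (Bc D) eV m'') (eX i) m' :=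
        pd_congr_on hc.hOmo (fun m'' hm'' => by linarith [hc.e3 hm'']) hm' (eX i)
      rw [h1, pd_const_sub 2]
    have step3 : pd (pd (Bc D) eV) (eX i) m' = pd (pd (Bc D) (eX i)) eV m' :=
      pd_comm (hc.hBnb hm') eV (eX i)
    have step4 : pd (pd (Bc D) (eX i)) eV m' = pd (pd (Wc D i) eU) eV m'
        - (pd (Qf p) eV m' * pd (Ac D) (eX i) m' + Qf p m' * pd (pd (Ac D) (eX i)) eV m') := by
      have h1 : pd (pd (Bc D) (eX i)) eV m'
          = pd (fun m'' => pd (Wc D i) eU m'' - Qf p m'' * pd (Ac D) (eX i) m'') eV m' :=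
        pd_congr_on hc.hOmo (fun m'' hm'' => by linarith [hc.e5 hm'' i]) hm' eV
      rw [h1, pd_sub (pd_differentiableAt (hc.hWca hm' i) eU)
        ((differentiableAt_Qf (hc.hpu hm')).fun_mul
          (pd_differentiableAt (hc.hAca hm') (eX i))),
        pd_mul (differentiableAt_Qf (hc.hpu hm'))
          (pd_differentiableAt (hc.hAca hm') (eX i))]
      ring
    have step5 : pd (pd (Wc D i) eU) eV m' = pd (pd (Ac D) (eX i)) eU m' := by
      rw [pd_comm (hc.hWnb hm' i) eU eV]
      have h1 : pd (pd (Wc D i) eV) eU m' = pd (pd (Ac D) (eX i)) eU m' := by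
        refine pd_congr_on hc.hOmo (fun m'' hm'' => (hc.e2 hm'' i).symm) hm' eU
      rw [h1]
    rw [step1, step2, step3, step4, step5, pd_Qf_eV (hc.hpu hm'), ha m' hm'] at *
    linarith [step1, step2]
  -- constancy and boundary value
  have hval : pd (Ac D) (eX i) ((u₀, 0, 0) : Mfd n) = 0 := by
    rw [hc.e2 hc.base_mem i, hc.vanish_pdV_W i]
  have := const_on hc.hOmo hc.hOmc
    (fun m' hm' => pd_contDiffAt (hc.hAca hm') (eX i)) hcu ha hb hm hc.base_mem
  rw [this, hval]

/-! ### consequences: W_v = 0, A_uu = 0, A ≡ 2(u-u₀) -/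

lemma pdWV (hm : m ∈ Om n U) (i : Fin n) : pd (Wc D i) eV m = 0 := by
  rw [← hc.e2 hm i, hc.stepA2 hm i]

/-- the (uu) equation rewritten using symmetry of `p` -/
lemma e6' (hm : m ∈ Om n U) :
    Ac D m * Qf (deriv p) m + 2 * (∑ k, Wc D k m * Lf p k m)
      + 2 * pd (Bc D) eU m + 2 * Qf p m * pd (Ac D) eU m - 2 * Qf p m = 0 := by
  have h := hc.e6 hm
  have hsym : (∑ i, ∑ j, p m.1 i j * (Wc D i m * m.2.2 j + m.2.2 i * Wc D j m))
      = 2 * (∑ k, Wc D k m * Lf p k m) := by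
    simp only [mul_add, Finset.sum_add_distrib]
    have h1 : (∑ i, ∑ j, p m.1 i j * (Wc D i m * m.2.2 j)) = ∑ k, Wc D k m * Lf p k m := by
      refine Finset.sum_congr rfl fun i _ => ?_
      rw [Lf, Finset.mul_sum]
      exact Finset.sum_congr rfl fun j _ => by ring
    have h2 : (∑ i, ∑ j, p m.1 i j * (m.2.2 i * Wc D j m)) = ∑ k, Wc D k m * Lf p k m := by
      rw [Finset.sum_comm]
      refine Finset.sum_congr rfl fun j _ => ?_
      rw [Lf, Finset.mul_sum]
      refine Finset.sum_congr rfl fun i _ => ?_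
      have : p m.1 i j = p m.1 j i := by
        conv_lhs => rw [← hc.hpsymm m.1 hm]
        rfl
      rw [this]; ring
    rw [h1, h2]; ring
  rw [hsym] at h
  linarith

/-- A_uu = 0 on Om -/
lemma stepA3 (hm : m ∈ Om n U) : pd (pd (Ac D) eU) eU m = 0 := by
  classical
  have hdiff1 : DifferentiableAt ℝ (fun m' => Ac D m' * Qf (deriv p) m') m :=
    ((hc.hAca hm).differentiableAt
      (by simp)).mul (differentiableAt_Qf (hc.hp'u hm))
  have hdiffS : DifferentiableAt ℝ (fun m' => ∑ k, Wc D k m' * Lf p k m') m := by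
    refine DifferentiableAt.fun_sum fun k _ => ?_
    exact ((hc.hWca hm k).differentiableAt (by simp)).mul
      (differentiableAt_Lf (hc.hpu hm) k)
  have hdiff2 : DifferentiableAt ℝ (fun m' => 2 * (∑ k, Wc D k m' * Lf p k m')) m :=
    hdiffS.const_mul 2
  have hdiff3 : DifferentiableAt ℝ (fun m' => 2 * pd (Bc D) eU m') m :=
    (pd_differentiableAt (hc.hBca hm) eU).const_mul 2
  have hdiff4 : DifferentiableAt ℝ (fun m' => 2 * Qf p m' * pd (Ac D) eU m') m :=
    ((differentiableAt_Qf (hc.hpu hm)).const_mul 2).mul (pd_differentiableAt (hc.hAca hm) eU)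
  have hdiff5 : DifferentiableAt ℝ (fun m' => 2 * Qf p m') m :=
    (differentiableAt_Qf (hc.hpu hm)).const_mul 2
  have hzero : pd (fun m' => Ac D m' * Qf (deriv p) m' + 2 * (∑ k, Wc D k m' * Lf p k m')
      + 2 * pd (Bc D) eU m' + 2 * Qf p m' * pd (Ac D) eU m' - 2 * Qf p m') eV m = 0 := by
    have := pd_congr_on hc.hOmo (fun m'' hm'' => hc.e6' hm'') hm eV
    rw [this, pd_const]
  rw [pd_sub (by exact ((hdiff1.add hdiff2).add hdiff3).add hdiff4) hdiff5] at hzero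
  rw [pd_add (by exact (hdiff1.add hdiff2).add hdiff3) hdiff4] at hzero
  rw [pd_add (by exact hdiff1.add hdiff2) hdiff3] at hzero
  rw [pd_add hdiff1 hdiff2] at hzero
  have t1 : pd (fun m' => Ac D m' * Qf (deriv p) m') eV m = 0 := by
    rw [pd_mul ((hc.hAca hm).differentiableAt (by simp))
      (differentiableAt_Qf (hc.hp'u hm)), hc.e1 hm, pd_Qf_eV (hc.hp'u hm)]
    ring
  have t2 : pd (fun m' => 2 * (∑ k, Wc D k m' * Lf p k m')) eV m = 0 := by
    rw [pd_const_mul hdiffS 2, pd_sum (fun k _ => ((hc.hWca hm k).differentiableAt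
      (by simp)).fun_mul (differentiableAt_Lf (hc.hpu hm) k))]
    rw [Finset.sum_eq_zero, mul_zero]
    intro k _
    rw [pd_mul ((hc.hWca hm k).differentiableAt (by simp))
      (differentiableAt_Lf (hc.hpu hm) k), hc.pdWV hm k, pd_Lf_eV (hc.hpu hm) k]
    ring
  have t3 : pd (fun m' => 2 * pd (Bc D) eU m') eV m = - (2 * pd (pd (Ac D) eU) eU m) := by
    rw [pd_const_mul (pd_differentiableAt (hc.hBca hm) eU) 2]
    rw [pd_comm (hc.hBnb hm) eU eV]
    have h1 : pd (pd (Bc D) eV) eU m = pd (fun m'' => 2 - pd (Ac D) eU m'') eU m :=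
      pd_congr_on hc.hOmo (fun m'' hm'' => by linarith [hc.e3 hm'']) hm eU
    rw [h1, pd_const_sub 2]
    ring
  have t4 : pd (fun m' => 2 * Qf p m' * pd (Ac D) eU m') eV m = 0 := by
    rw [pd_mul ((differentiableAt_Qf (hc.hpu hm)).const_mul 2)
      (pd_differentiableAt (hc.hAca hm) eU)]
    have hA : pd (pd (Ac D) eU) eV m = 0 := by
      rw [pd_comm (hc.hAnb hm) eU eV]
      have : pd (pd (Ac D) eV) eU m = pd (fun _ => (0:ℝ)) eU m :=
        pd_congr_on hc.hOmo (fun m'' hm'' => hc.e1 hm'') hm eU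
      rw [this, pd_const]
    have hQ : pd (fun m' => 2 * Qf p m') eV m = 0 := by
      rw [pd_const_mul (differentiableAt_Qf (hc.hpu hm)) 2, pd_Qf_eV (hc.hpu hm)]
      ring
    rw [hA, hQ]
    ring
  have t5 : pd (fun m' => 2 * Qf p m') eV m = 0 := by
    rw [pd_const_mul (differentiableAt_Qf (hc.hpu hm)) 2, pd_Qf_eV (hc.hpu hm)]
    ring
  rw [t1, t2, t3, t4, t5] at hzero
  linarith

/-- A_u ≡ 2 on Om -/
lemma stepAu (hm : m ∈ Om n U) : pd (Ac D) eU m = 2 := by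
  have hval : pd (Ac D) eU ((u₀, 0, 0) : Mfd n) = 2 := by
    have := hc.e3 hc.base_mem
    rw [hc.vanish_pdV_B] at this
    linarith
  have hV : ∀ m' ∈ Om n U, pd (pd (Ac D) eU) eV m' = 0 := by
    intro m' hm'
    rw [pd_comm (hc.hAnb hm') eU eV]
    have : pd (pd (Ac D) eV) eU m' = pd (fun _ => (0:ℝ)) eU m' :=
      pd_congr_on hc.hOmo (fun m'' hm'' => hc.e1 hm'') hm' eU
    rw [this, pd_const]
  have hX : ∀ m' ∈ Om n U, ∀ i, pd (pd (Ac D) eU) (eX i) m' = 0 := by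
    intro m' hm' i
    rw [pd_comm (hc.hAnb hm') eU (eX i)]
    have : pd (pd (Ac D) (eX i)) eU m' = pd (fun _ => (0:ℝ)) eU m' :=
      pd_congr_on hc.hOmo (fun m'' hm'' => hc.stepA2 hm'' i) hm' eU
    rw [this, pd_const]
  have := const_on hc.hOmo hc.hOmc (fun m' hm' => pd_contDiffAt (hc.hAca hm') eU)
    (fun m' hm' => hc.stepA3 hm') hV hX hm hc.base_mem
  rw [this, hval]

/-- A ≡ 2(u - u₀) on Om -/
lemma stepA (hm : m ∈ Om n U) : Ac D m = 2 * (m.1 - u₀) := by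
  have hg : ∀ m' ∈ Om n U, ContDiffAt ℝ (⊤ : ℕ∞) (fun m'' => Ac D m'' - 2 * (m''.1 - u₀)) m' := by
    intro m' hm'
    refine (hc.hAca hm').sub ?_
    refine ContDiff.contDiffAt ?_
    refine ContDiff.mul contDiff_const ?_
    exact (contDiff_fst).sub contDiff_const
  have hdaff : ∀ m' : Mfd n, DifferentiableAt ℝ (fun m'' : Mfd n => 2 * (m''.1 - u₀)) m' := by
    intro m'
    exact ((differentiable_fst.sub_const u₀).const_mul 2).differentiableAt
  have key : ∀ X : Mfd n, ∀ m' ∈ Om n U,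
      pd (fun m'' => Ac D m'' - 2 * (m''.1 - u₀)) X m'
        = pd (Ac D) X m' - 2 * X.1 := by
    intro X m' hm'
    rw [pd_sub ((hc.hAca hm').differentiableAt (by simp)) (hdaff m'),
      pd_affine u₀ X]
  have := const_on hc.hOmo hc.hOmc hg
    (fun m' hm' => by rw [key eU m' hm', hc.stepAu hm']; simp)
    (fun m' hm' => by rw [key eV m' hm', hc.e1 hm']; simp)
    (fun m' hm' i => by rw [key (eX i) m' hm', hc.stepA2 hm' i]; simp)
    hm hc.base_mem
  have hbase : Ac D ((u₀, 0, 0) : Mfd n) = 0 := by rw [Ac, hc.hvanish 0]; rfl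
  have h0 : Ac D m - 2 * (m.1 - u₀) = 0 := by
    rw [this, hbase]; simp
  linarith

/-- the simplified (u,x) equation -/
lemma e5' (hm : m ∈ Om n U) (i : Fin n) : pd (Bc D) (eX i) m = pd (Wc D i) eU m := by
  have := hc.e5 hm i
  rw [hc.stepA2 hm i] at this
  linarith

/-- the u-derivative of the x-gradient of W vanishes -/
lemma stepM (hm : m ∈ Om n U) (i j : Fin n) : pd (pd (Wc D i) (eX j)) eU m = 0 := by
  have hs : ∀ i' j' : Fin n,
      pd (pd (Wc D i') (eX j')) eU m = pd (pd (Bc D) (eX i')) (eX j') m := by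
    intro i' j'
    rw [pd_comm (hc.hWnb hm i') (eX j') eU]
    have h1 : pd (pd (Wc D i') eU) (eX j') m = pd (pd (Bc D) (eX i')) (eX j') m :=
      pd_congr_on hc.hOmo (fun m'' hm'' => (hc.e5' hm'' i').symm) hm (eX j')
    rw [h1]
  have hsym : pd (pd (Bc D) (eX i)) (eX j) m = pd (pd (Bc D) (eX j)) (eX i) m :=
    pd_comm (hc.hBnb hm) (eX i) (eX j)
  have hskew : pd (pd (Wc D i) (eX j)) eU m + pd (pd (Wc D j) (eX i)) eU m = 0 := by
    have h1 : pd (fun m'' => pd (Wc D i) (eX j) m'' + pd (Wc D j) (eX i) m'') eU m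
        = pd (fun _ => (if i = j then (2:ℝ) else 0)) eU m :=
      pd_congr_on hc.hOmo (fun m'' hm'' => hc.e4 hm'' i j) hm eU
    rw [pd_add (pd_differentiableAt (hc.hWca hm i) (eX j))
      (pd_differentiableAt (hc.hWca hm j) (eX i)), pd_const] at h1
    exact h1
  have e₁ := hs i j
  have e₂ := hs j i
  linarith

/-- constancy of the x-gradient of W along the axis -/
lemma Mconst {u : ℝ} (hu : u ∈ U) (i j : Fin n) :
    pd (Wc D i) (eX j) ((u, 0, 0) : Mfd n) = pd (Wc D i) (eX j) ((u₀, 0, 0) : Mfd n) := by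
  set f : ℝ → ℝ := fun t => pd (Wc D i) (eX j) ((t, 0, 0) : Mfd n) with hf
  have hγ : ∀ t : ℝ, HasFDerivAt (fun t' : ℝ => ((t', 0, 0) : Mfd n))
      (ContinuousLinearMap.inl ℝ ℝ (ℝ × (Fin n → ℝ))) t := fun t =>
    (ContinuousLinearMap.inl ℝ ℝ (ℝ × (Fin n → ℝ))).hasFDerivAt
  have hdiff : ∀ t ∈ U, DifferentiableAt ℝ f t := by
    intro t ht
    have hmem : ((t, 0, 0) : Mfd n) ∈ Om n U := ht
    exact ((pd_differentiableAt (hc.hWca hmem i) (eX j)).hasFDerivAt.comp t (hγ t)).differentiableAt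
  have hderiv : ∀ t ∈ U, fderiv ℝ f t = 0 := by
    intro t ht
    have hmem : ((t, 0, 0) : Mfd n) ∈ Om n U := ht
    have h1 := ((pd_differentiableAt (hc.hWca hmem i) (eX j)).hasFDerivAt.comp t (hγ t)).fderiv
    refine ContinuousLinearMap.ext_ring ?_
    rw [show (fderiv ℝ f t) 1 = ((fderiv ℝ (pd (Wc D i) (eX j)) ((t, 0, 0) : Mfd n)).comp
        (ContinuousLinearMap.inl ℝ ℝ (ℝ × (Fin n → ℝ)))) 1 from by rw [← h1]; rfl]
    have : fderiv ℝ (pd (Wc D i) (eX j)) ((t, 0, 0) : Mfd n) eU = 0 := hc.stepM hmem i j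
    exact this
  exact hc.hUconv.is_const_of_fderivWithin_eq_zero
    (fun t ht => (hdiff t ht).differentiableWithinAt)
    (fun t ht => by rw [fderivWithin_of_isOpen hc.hUopen ht]; exact hderiv t ht) hu hc.hu₀


/-- second x-derivatives of B_u vanish -/
lemma Bterm (hm : m ∈ Om n U) (i j : Fin n) :
    pd (pd (pd (Bc D) eU) (eX i)) (eX j) m = 0 := by
  have h1 : ∀ m' ∈ Om n U, pd (pd (Bc D) eU) (eX i) m' = pd (pd (Wc D i) eU) eU m' := by
    intro m' hm'
    rw [pd_comm (hc.hBnb hm') eU (eX i)]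
    exact pd_congr_on hc.hOmo (fun m'' hm'' => hc.e5' hm'' i) hm' eU
  have h2 : pd (pd (pd (Bc D) eU) (eX i)) (eX j) m
      = pd (pd (pd (Wc D i) eU) eU) (eX j) m :=
    pd_congr_on hc.hOmo h1 hm (eX j)
  rw [h2]
  have hgnb : ∀ᶠ m' in nhds m, ContDiffAt ℝ (⊤ : ℕ∞) (pd (Wc D i) eU) m' := by
    filter_upwards [hc.hOmo.mem_nhds hm] with m' hm' using pd_contDiffAt (hc.hWca hm' i) eU
  rw [pd_comm hgnb eU (eX j)]
  have h3 : ∀ m' ∈ Om n U, pd (pd (Wc D i) eU) (eX j) m' = 0 := by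
    intro m' hm'
    rw [pd_comm (hc.hWnb hm' i) eU (eX j)]
    exact hc.stepM hm' i j
  have h4 : pd (pd (pd (Wc D i) eU) (eX j)) eU m = pd (fun _ => (0:ℝ)) eU m :=
    pd_congr_on hc.hOmo h3 hm eU
  rw [h4, pd_const]

/-- the (uu) equation with A substituted -/
lemma e6'' (hm : m ∈ Om n U) :
    2 * (m.1 - u₀) * Qf (deriv p) m + 2 * (∑ k, Wc D k m * Lf p k m)
      + 2 * pd (Bc D) eU m + 2 * Qf p m = 0 := by
  have h := hc.e6' hm
  rw [hc.stepA hm, hc.stepAu hm] at h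
  linarith

/-- THE pointwise ODE for p -/
lemma star {u : ℝ} (hu : u ∈ U) (i j : Fin n) :
    2 * (u - u₀) * (deriv p u i j + deriv p u j i)
      + 2 * (∑ k, (pd (Wc D k) (eX j) ((u₀, 0, 0) : Mfd n) * p u k i
          + pd (Wc D k) (eX i) ((u₀, 0, 0) : Mfd n) * p u k j))
      + 2 * (p u i j + p u j i) = 0 := by
  classical
  set m₀ : Mfd n := ((u, 0, 0) : Mfd n) with hm₀def
  have hm₀ : m₀ ∈ Om n U := hu
  have dAff : ∀ m' : Mfd n, DifferentiableAt ℝ (fun m'' : Mfd n => 2 * (m''.1 - u₀)) m' :=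
    fun m' => ((differentiable_fst.sub_const u₀).const_mul 2).differentiableAt
  have dT1 : ∀ m' ∈ Om n U, DifferentiableAt ℝ
      (fun m'' => 2 * (m''.1 - u₀) * Qf (deriv p) m'') m' :=
    fun m' hm' => (dAff m').mul (differentiableAt_Qf (hc.hp'u hm'))
  have dS : ∀ m' ∈ Om n U, DifferentiableAt ℝ (fun m'' => ∑ k, Wc D k m'' * Lf p k m'') m' :=
    fun m' hm' => DifferentiableAt.fun_sum fun k _ =>
      ((hc.hWca hm' k).differentiableAt (by simp)).mul
        (differentiableAt_Lf (hc.hpu hm') k)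
  have dT2 : ∀ m' ∈ Om n U, DifferentiableAt ℝ
      (fun m'' => 2 * (∑ k, Wc D k m'' * Lf p k m'')) m' :=
    fun m' hm' => (dS m' hm').const_mul 2
  have dT3 : ∀ m' ∈ Om n U, DifferentiableAt ℝ (fun m'' => 2 * pd (Bc D) eU m'') m' :=
    fun m' hm' => (pd_differentiableAt (hc.hBca hm') eU).const_mul 2
  have dT4 : ∀ m' ∈ Om n U, DifferentiableAt ℝ (fun m'' => 2 * Qf p m'') m' :=
    fun m' hm' => (differentiableAt_Qf (hc.hpu hm')).const_mul 2
  have hG1 : ∀ m' ∈ Om n U,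
      2 * (m'.1 - u₀) * (Lf (deriv p) i m' + Lg (deriv p) i m')
        + 2 * (∑ k, (Wc D k m' * p m'.1 k i + pd (Wc D k) (eX i) m' * Lf p k m'))
        + 2 * pd (pd (Bc D) eU) (eX i) m' + 2 * (Lf p i m' + Lg p i m') = 0 := by
    intro m' hm'
    have hzero : pd (fun m'' => 2 * (m''.1 - u₀) * Qf (deriv p) m''
        + 2 * (∑ k, Wc D k m'' * Lf p k m'')
        + 2 * pd (Bc D) eU m'' + 2 * Qf p m'') (eX i) m' = 0 := by
      have := pd_congr_on hc.hOmo (fun m'' hm'' => hc.e6'' hm'') hm' (eX i)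
      rw [this, pd_const]
    rw [pd_add (by exact ((dT1 m' hm').add (dT2 m' hm')).add (dT3 m' hm')) (dT4 m' hm')] at hzero
    rw [pd_add (by exact (dT1 m' hm').add (dT2 m' hm')) (dT3 m' hm')] at hzero
    rw [pd_add (dT1 m' hm') (dT2 m' hm')] at hzero
    have u1 : pd (fun m'' => 2 * (m''.1 - u₀) * Qf (deriv p) m'') (eX i) m'
        = 2 * (m'.1 - u₀) * (Lf (deriv p) i m' + Lg (deriv p) i m') := by
      rw [pd_mul (dAff m') (differentiableAt_Qf (hc.hp'u hm')), pd_affine u₀ (eX i),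
        pd_Qf_eX (hc.hp'u hm') i]
      simp
    have u2 : pd (fun m'' => 2 * (∑ k, Wc D k m'' * Lf p k m'')) (eX i) m'
        = 2 * (∑ k, (Wc D k m' * p m'.1 k i + pd (Wc D k) (eX i) m' * Lf p k m')) := by
      rw [pd_const_mul (dS m' hm') 2, pd_sum (fun k _ =>
        ((hc.hWca hm' k).differentiableAt (by simp)).fun_mul
          (differentiableAt_Lf (hc.hpu hm') k))]
      congr 1
      refine Finset.sum_congr rfl fun k _ => ?_
      rw [pd_mul ((hc.hWca hm' k).differentiableAt (by simp))
        (differentiableAt_Lf (hc.hpu hm') k), pd_Lf_eX (hc.hpu hm') k i]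
    have u3 : pd (fun m'' => 2 * pd (Bc D) eU m'') (eX i) m'
        = 2 * pd (pd (Bc D) eU) (eX i) m' :=
      pd_const_mul (pd_differentiableAt (hc.hBca hm') eU) 2
    have u4 : pd (fun m'' => 2 * Qf p m'') (eX i) m' = 2 * (Lf p i m' + Lg p i m') := by
      rw [pd_const_mul (differentiableAt_Qf (hc.hpu hm')) 2, pd_Qf_eX (hc.hpu hm') i]
    rw [u1, u2, u3, u4] at hzero
    linarith
  have dG11 : DifferentiableAt ℝ
      (fun m'' => 2 * (m''.1 - u₀) * (Lf (deriv p) i m'' + Lg (deriv p) i m'')) m₀ :=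
    (dAff m₀).mul ((differentiableAt_Lf (hc.hp'u hm₀) i).add (differentiableAt_Lg (hc.hp'u hm₀) i))
  have dentry : ∀ k : Fin n, DifferentiableAt ℝ (fun m'' : Mfd n => p m''.1 k i) m₀ :=
    fun k => (hasFDerivAt_entry_fst (hc.hpu hm₀) k i).differentiableAt
  have dG12S : DifferentiableAt ℝ
      (fun m'' => ∑ k, (Wc D k m'' * p m''.1 k i + pd (Wc D k) (eX i) m'' * Lf p k m'')) m₀ := by
    refine DifferentiableAt.fun_sum fun k _ => ?_
    exact (((hc.hWca hm₀ k).differentiableAt (by simp)).mul (dentry k)).add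
      ((pd_differentiableAt (hc.hWca hm₀ k) (eX i)).mul (differentiableAt_Lf (hc.hpu hm₀) k))
  have dG12 : DifferentiableAt ℝ
      (fun m'' => 2 * ∑ k, (Wc D k m'' * p m''.1 k i + pd (Wc D k) (eX i) m'' * Lf p k m'')) m₀ :=
    dG12S.const_mul 2
  have dG13 : DifferentiableAt ℝ (fun m'' => 2 * pd (pd (Bc D) eU) (eX i) m'') m₀ :=
    (pd_differentiableAt (pd_contDiffAt (hc.hBca hm₀) eU) (eX i)).const_mul 2
  have dG14 : DifferentiableAt ℝ (fun m'' => 2 * (Lf p i m'' + Lg p i m'')) m₀ :=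
    ((differentiableAt_Lf (hc.hpu hm₀) i).add (differentiableAt_Lg (hc.hpu hm₀) i)).const_mul 2
  have hzero2 : pd (fun m'' => 2 * (m''.1 - u₀) * (Lf (deriv p) i m'' + Lg (deriv p) i m'')
      + 2 * (∑ k, (Wc D k m'' * p m''.1 k i + pd (Wc D k) (eX i) m'' * Lf p k m''))
      + 2 * pd (pd (Bc D) eU) (eX i) m'' + 2 * (Lf p i m'' + Lg p i m'')) (eX j) m₀ = 0 := by
    have := pd_congr_on hc.hOmo hG1 hm₀ (eX j)
    rw [this, pd_const]
  rw [pd_add (by exact (dG11.add dG12).add dG13) dG14] at hzero2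
  rw [pd_add (by exact dG11.add dG12) dG13] at hzero2
  rw [pd_add dG11 dG12] at hzero2
  have hx0 : m₀.2.2 = 0 := rfl
  have w1 : pd (fun m'' => 2 * (m''.1 - u₀) * (Lf (deriv p) i m'' + Lg (deriv p) i m''))
      (eX j) m₀ = 2 * (u - u₀) * (deriv p u i j + deriv p u j i) := by
    rw [pd_mul (dAff m₀) ((differentiableAt_Lf (hc.hp'u hm₀) i).fun_add
      (differentiableAt_Lg (hc.hp'u hm₀) i)), pd_affine u₀ (eX j)]
    rw [pd_add (differentiableAt_Lf (hc.hp'u hm₀) i) (differentiableAt_Lg (hc.hp'u hm₀) i)]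
    rw [pd_Lf_eX (hc.hp'u hm₀) i j, pd_Lg_eX (hc.hp'u hm₀) i j]
    have hLf0 : Lf (deriv p) i m₀ + Lg (deriv p) i m₀ = 0 := by simp [Lf, Lg, hx0]
    rw [show (m₀.1 : ℝ) = u from rfl]
    rw [hLf0]
    simp
  have w2 : pd (fun m'' => 2 * (∑ k, (Wc D k m'' * p m''.1 k i
      + pd (Wc D k) (eX i) m'' * Lf p k m''))) (eX j) m₀
      = 2 * (∑ k, (pd (Wc D k) (eX j) ((u₀, 0, 0) : Mfd n) * p u k i
          + pd (Wc D k) (eX i) ((u₀, 0, 0) : Mfd n) * p u k j)) := by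
    rw [pd_const_mul dG12S 2, pd_sum (fun k _ =>
      (((hc.hWca hm₀ k).differentiableAt (by simp)).fun_mul (dentry k)).fun_add
      ((pd_differentiableAt (hc.hWca hm₀ k) (eX i)).fun_mul (differentiableAt_Lf (hc.hpu hm₀) k)))]
    congr 1
    refine Finset.sum_congr rfl fun k _ => ?_
    rw [pd_add (((hc.hWca hm₀ k).differentiableAt (by simp)).fun_mul (dentry k))
      ((pd_differentiableAt (hc.hWca hm₀ k) (eX i)).fun_mul (differentiableAt_Lf (hc.hpu hm₀) k))]
    rw [pd_mul ((hc.hWca hm₀ k).differentiableAt (by simp)) (dentry k)]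
    rw [pd_mul (pd_differentiableAt (hc.hWca hm₀ k) (eX i)) (differentiableAt_Lf (hc.hpu hm₀) k)]
    rw [pd_entry (hc.hpu hm₀) k i (eX j), pd_Lf_eX (hc.hpu hm₀) k j]
    have hLf0 : Lf p k m₀ = 0 := by simp [Lf, hx0]
    have hMi : pd (Wc D k) (eX i) m₀ = pd (Wc D k) (eX i) ((u₀, 0, 0) : Mfd n) :=
      hc.Mconst hu k i
    have hMj : pd (Wc D k) (eX j) m₀ = pd (Wc D k) (eX j) ((u₀, 0, 0) : Mfd n) :=
      hc.Mconst hu k j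
    rw [hLf0, hMi, hMj]
    rw [show (m₀.1 : ℝ) = u from rfl]
    simp
    try ring
  have w3 : pd (fun m'' => 2 * pd (pd (Bc D) eU) (eX i) m'') (eX j) m₀ = 0 := by
    rw [pd_const_mul (pd_differentiableAt (pd_contDiffAt (hc.hBca hm₀) eU) (eX i)) 2]
    rw [hc.Bterm hm₀ i j]
    ring
  have w4 : pd (fun m'' => 2 * (Lf p i m'' + Lg p i m'')) (eX j) m₀
      = 2 * (p u i j + p u j i) := by
    rw [pd_const_mul ((differentiableAt_Lf (hc.hpu hm₀) i).fun_add
      (differentiableAt_Lg (hc.hpu hm₀) i)) 2]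
    rw [pd_add (differentiableAt_Lf (hc.hpu hm₀) i) (differentiableAt_Lg (hc.hpu hm₀) i)]
    rw [pd_Lf_eX (hc.hpu hm₀) i j, pd_Lg_eX (hc.hpu hm₀) i j]
    try rfl
  rw [w1, w2, w3, w4] at hzero2
  linarith


/-- the scalar ODE for the squared norm of p -/
lemma ode {u : ℝ} (hu : u ∈ U) :
    (u - u₀) * (∑ i, ∑ j, p u i j * deriv p u i j)
      = -2 * (∑ i, ∑ j, p u i j * p u i j) := by
  classical
  set P : Fin n → Fin n → ℝ := fun a b => p u a b with hP
  set P' : Fin n → Fin n → ℝ := fun a b => deriv p u a b with hP'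
  set N : Fin n → Fin n → ℝ := fun a b => pd (Wc D a) (eX b) ((u₀, 0, 0) : Mfd n) with hN
  have hsymP : ∀ a b, P a b = P b a := by
    intro a b
    have h := hc.hpsymm u hu
    show p u a b = p u b a
    conv_lhs => rw [← h]
    rfl
  have hNsym : ∀ a b, N a b + N b a = if a = b then 2 else 0 := fun a b =>
    hc.e4 hc.base_mem a b
  have h0 : ∑ i, ∑ j, P i j * (2 * (u - u₀) * (P' i j + P' j i)
      + 2 * (∑ k, (N k j * P k i + N k i * P k j))
      + 2 * (P i j + P j i)) = 0 := by
    refine Finset.sum_eq_zero fun i _ => Finset.sum_eq_zero fun j _ => ?_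
    have := hc.star hu i j
    rw [show (2 * (u - u₀) * (P' i j + P' j i)
      + 2 * (∑ k, (N k j * P k i + N k i * P k j))
      + 2 * (P i j + P j i)) = 0 from this, mul_zero]
  have h0' : (∑ i, ∑ j, ((2 * (u - u₀) * (P i j * P' i j) + 2 * (u - u₀) * (P i j * P' j i))
      + ((∑ k, 2 * (P i j * (N k j * P k i))) + (∑ k, 2 * (P i j * (N k i * P k j))))
      + (2 * (P i j * P i j) + 2 * (P i j * P j i)))) = 0 := by
    rw [show (∑ i, ∑ j, ((2 * (u - u₀) * (P i j * P' i j) + 2 * (u - u₀) * (P i j * P' j i))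
      + ((∑ k, 2 * (P i j * (N k j * P k i))) + (∑ k, 2 * (P i j * (N k i * P k j))))
      + (2 * (P i j * P i j) + 2 * (P i j * P j i))))
        = ∑ i, ∑ j, P i j * (2 * (u - u₀) * (P' i j + P' j i)
          + 2 * (∑ k, (N k j * P k i + N k i * P k j))
          + 2 * (P i j + P j i)) from ?_]
    · exact h0
    refine Finset.sum_congr rfl fun i _ => Finset.sum_congr rfl fun j _ => ?_
    have hmulsum : (∑ k, 2 * (P i j * (N k j * P k i))) + (∑ k, 2 * (P i j * (N k i * P k j)))
        = P i j * (2 * (∑ k, (N k j * P k i + N k i * P k j))) := by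
      rw [show P i j * (2 * (∑ k, (N k j * P k i + N k i * P k j)))
          = (2 * P i j) * (∑ k, (N k j * P k i + N k i * P k j)) from by ring,
        Finset.mul_sum, ← Finset.sum_add_distrib]
      refine Finset.sum_congr rfl fun k _ => by ring
    linear_combination hmulsum
  simp only [Finset.sum_add_distrib] at h0'
  have hA : ∑ i, ∑ j, 2 * (u - u₀) * (P i j * P' i j)
      = 2 * (u - u₀) * ∑ i, ∑ j, P i j * P' i j := by
    rw [Finset.mul_sum]
    refine Finset.sum_congr rfl fun i _ => ?_
    rw [Finset.mul_sum]
  have hB : ∑ i, ∑ j, 2 * (u - u₀) * (P i j * P' j i)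
      = 2 * (u - u₀) * ∑ i, ∑ j, P i j * P' j i := by
    rw [Finset.mul_sum]
    refine Finset.sum_congr rfl fun i _ => ?_
    rw [Finset.mul_sum]
  have hS1 : ∑ i, ∑ j, ∑ k, 2 * (P i j * (N k j * P k i))
      = 2 * ∑ i, ∑ j, ∑ k, P i j * (N k j * P k i) := by
    rw [Finset.mul_sum]
    refine Finset.sum_congr rfl fun i _ => ?_
    rw [Finset.mul_sum]
    refine Finset.sum_congr rfl fun j _ => ?_
    rw [Finset.mul_sum]
  have hS2 : ∑ i, ∑ j, ∑ k, 2 * (P i j * (N k i * P k j))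
      = 2 * ∑ i, ∑ j, ∑ k, P i j * (N k i * P k j) := by
    rw [Finset.mul_sum]
    refine Finset.sum_congr rfl fun i _ => ?_
    rw [Finset.mul_sum]
    refine Finset.sum_congr rfl fun j _ => ?_
    rw [Finset.mul_sum]
  have hC : ∑ i, ∑ j, 2 * (P i j * P i j) = 2 * ∑ i, ∑ j, P i j * P i j := by
    rw [Finset.mul_sum]
    refine Finset.sum_congr rfl fun i _ => ?_
    rw [Finset.mul_sum]
  have hD : ∑ i, ∑ j, 2 * (P i j * P j i) = 2 * ∑ i, ∑ j, P i j * P j i := by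
    rw [Finset.mul_sum]
    refine Finset.sum_congr rfl fun i _ => ?_
    rw [Finset.mul_sum]
  rw [hA, hB, hS1, hS2, hC, hD] at h0'
  have key1 : ∑ i, ∑ j, P i j * P' j i = ∑ i, ∑ j, P i j * P' i j := by
    rw [Finset.sum_comm]
    exact Finset.sum_congr rfl fun a _ => Finset.sum_congr rfl fun b _ => by rw [hsymP b a]
  have key3 : ∑ i, ∑ j, P i j * P j i = ∑ i, ∑ j, P i j * P i j := by
    rw [Finset.sum_comm]
    exact Finset.sum_congr rfl fun a _ => Finset.sum_congr rfl fun b _ => by rw [hsymP b a]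
  have hab : ∑ i, ∑ j, ∑ k, P i j * (N k i * P k j)
      = ∑ i, ∑ j, ∑ k, P i j * (N k j * P k i) := by
    rw [Finset.sum_comm]
    exact Finset.sum_congr rfl fun a _ => Finset.sum_congr rfl fun b _ =>
      Finset.sum_congr rfl fun k _ => by rw [hsymP b a]
  set R : Fin n → Fin n → ℝ := fun k j => ∑ i, P i j * P k i with hR
  have hRsym : ∀ k j, R k j = R j k := by
    intro k j
    refine Finset.sum_congr rfl fun i _ => ?_
    rw [hsymP i j, hsymP k i]
    ring
  have hreorder : ∑ i, ∑ j, ∑ k, P i j * (N k j * P k i) = ∑ k, ∑ j, N k j * R k j := by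
    rw [show (∑ i, ∑ j, ∑ k, P i j * (N k j * P k i))
        = ∑ i, ∑ k, ∑ j, P i j * (N k j * P k i) from
      Finset.sum_congr rfl fun i _ => Finset.sum_comm]
    rw [Finset.sum_comm]
    refine Finset.sum_congr rfl fun k _ => ?_
    rw [Finset.sum_comm]
    refine Finset.sum_congr rfl fun j _ => ?_
    rw [hR]
    show ∑ i, P i j * (N k j * P k i) = N k j * ∑ i, P i j * P k i
    rw [Finset.mul_sum]
    refine Finset.sum_congr rfl fun i _ => by ring
  have hT1 : ∑ k, ∑ j, N k j * R k j = ∑ k, ∑ j, N j k * R k j := by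
    rw [Finset.sum_comm]
    exact Finset.sum_congr rfl fun a _ => Finset.sum_congr rfl fun b _ => by rw [hRsym a b]
  have hdiag : (∑ k, ∑ j, N k j * R k j) + (∑ k, ∑ j, N k j * R k j)
      = 2 * ∑ k, R k k := by
    nth_rewrite 1 [hT1]
    rw [← Finset.sum_add_distrib]
    rw [show (∑ k, ((∑ j, N j k * R k j) + ∑ j, N k j * R k j))
        = ∑ k, ∑ j, (N k j + N j k) * R k j from
      Finset.sum_congr rfl fun k _ => by
        rw [← Finset.sum_add_distrib]
        exact Finset.sum_congr rfl fun j _ => by ring]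
    rw [Finset.mul_sum]
    refine Finset.sum_congr rfl fun k _ => ?_
    rw [show (∑ j, (N k j + N j k) * R k j) = ∑ j, (if k = j then 2 else 0) * R k j from
      Finset.sum_congr rfl fun j _ => by rw [hNsym k j]]
    simp [Finset.sum_ite_eq]
  have hRf : ∑ k, R k k = ∑ i, ∑ j, P i j * P i j := by
    rw [Finset.sum_comm]
    refine Finset.sum_congr rfl fun i _ => ?_
    refine Finset.sum_congr rfl fun k _ => ?_
    rw [hsymP k i]
  have hmid : ∑ i, ∑ j, ∑ k, P i j * (N k j * P k i) = ∑ i, ∑ j, P i j * P i j := by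
    have h2 : (2:ℝ) * (∑ k, ∑ j, N k j * R k j) = 2 * (∑ i, ∑ j, P i j * P i j) := by
      rw [two_mul, hdiag, hRf]
    have := mul_left_cancel₀ (two_ne_zero (α := ℝ)) h2
    rw [hreorder, this]
  rw [key1, hab, hmid, key3] at h0'
  linear_combination (1/4 : ℝ) * h0'

/-- the conclusion: p vanishes on U -/
lemma pzero {u : ℝ} (hu : u ∈ U) : p u = 0 := by
  classical
  set f : ℝ → ℝ := fun t => ∑ i, ∑ j, p t i j * p t i j with hfdef
  have hfd : ∀ t ∈ U, HasDerivAt f (2 * ∑ i, ∑ j, p t i j * deriv p t i j) t := by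
    intro t ht
    have h1 : HasDerivAt f (∑ i, ∑ j, (deriv p t i j * p t i j + p t i j * deriv p t i j)) t := by
      refine HasDerivAt.fun_sum fun i _ => ?_
      refine HasDerivAt.fun_sum fun j _ => ?_
      exact (hasDerivAt_entry (hc.hpu ht) i j).mul (hasDerivAt_entry (hc.hpu ht) i j)
    convert h1 using 1
    rw [Finset.mul_sum]
    refine Finset.sum_congr rfl fun i _ => ?_
    rw [Finset.mul_sum]
    exact Finset.sum_congr rfl fun j _ => by ring
  have hfu : f u = 0 := by
    rcases eq_or_ne u u₀ with h | h
    · have := hc.ode hu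
      rw [h] at this ⊢
      simp only [sub_self, zero_mul] at this
      have hff : f u₀ = ∑ i, ∑ j, p u₀ i j * p u₀ i j := rfl
      rw [hff]
      linarith [this]
    · set g : ℝ → ℝ := fun t => (t - u₀)^4 * f t with hgdef
      have hgd : ∀ t ∈ U, HasDerivAt g 0 t := by
        intro t ht
        have h1 : HasDerivAt (fun s : ℝ => (s - u₀)^4) (4 * (t - u₀)^3 * 1) t :=
          ((hasDerivAt_id t).sub_const u₀).pow 4
        have h2 := h1.fun_mul (hfd t ht)
        have hode := hc.ode ht
        refine h2.congr_deriv (Eq.symm ?_)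
        have hft : f t = ∑ i, ∑ j, p t i j * p t i j := rfl
        rw [hft]
        linear_combination (-2 : ℝ) * (t - u₀)^3 * hode
      have hconst : g u = g u₀ := by
        refine hc.hUconv.is_const_of_fderivWithin_eq_zero
          (fun t ht => ((hgd t ht).differentiableAt).differentiableWithinAt)
          (fun t ht => ?_) hu hc.hu₀
        rw [fderivWithin_of_isOpen hc.hUopen ht, (hgd t ht).hasFDerivAt.fderiv]
        refine ContinuousLinearMap.ext fun x => ?_
        simp
      have hg0 : g u₀ = 0 := by
        rw [hgdef]
        simp
      rw [hg0] at hconst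
      have h4 : (u - u₀)^4 ≠ 0 := pow_ne_zero 4 (sub_ne_zero.mpr h)
      have := mul_eq_zero.mp hconst
      rcases this with h' | h'
      · exact absurd h' h4
      · exact h'
  ext i j
  have hnonneg : ∀ a ∈ (Finset.univ : Finset (Fin n)),
      (0:ℝ) ≤ ∑ b, p u a b * p u a b :=
    fun a _ => Finset.sum_nonneg fun b _ => mul_self_nonneg _
  have h1 := (Finset.sum_eq_zero_iff_of_nonneg hnonneg).mp hfu i (Finset.mem_univ i)
  have h2 := (Finset.sum_eq_zero_iff_of_nonneg
    (fun b _ => mul_self_nonneg (p u i b))).mp h1 j (Finset.mem_univ j)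
  simpa using mul_self_eq_zero.mp h2


end Ctx



end Stmt7Aux

/-- if a Brinkmann plane wave (with `n ≥ 2`) admits an infinitesimal dilation
(`ℒ_D G = 2G`) vanishing along the null geodesic `{u = u₀, x = 0}`, then `p ≡ 0`, i.e.
the metric is the flat metric `2 du dv − dxᵀdx`. -/
theorem stmt7 (n : ℕ) (hn : 2 ≤ n)
    (U : Set ℝ) (hUopen : IsOpen U) (hUconv : Convex ℝ U) (hUne : U.Nonempty)
    (u₀ : ℝ) (hu₀ : u₀ ∈ U)
    (p : ℝ → Matrix (Fin n) (Fin n) ℝ)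
    (hpsmooth : ContDiffOn ℝ (⊤ : ℕ∞) p U)
    (hpsymm : ∀ u ∈ U, (p u)ᵀ = p u)
    (D : Mfd n → Mfd n)
    (hDsmooth : ContDiffOn ℝ (⊤ : ℕ∞) D {m : Mfd n | m.1 ∈ U})
    (hdilation : ∀ m ∈ {m : Mfd n | m.1 ∈ U}, ∀ X Y,
      lieD n D (Gb n p) m X Y = 2 * Gb n p m X Y)
    (hvanish : ∀ v : ℝ, D (u₀, v, 0) = 0) :
    ∀ u ∈ U, p u = 0 := by
  intro u hu
  have hcx : Stmt7Aux.Ctx n U u₀ p D :=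
    ⟨hUopen, hUconv, hu₀, hpsmooth, hpsymm, hDsmooth, hdilation, hvanish⟩
  exact hcx.pzero hu
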